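/- (Lemma 5) If α_t ≤ 1/(2L), then for all epochs t ≥ 0 and all ℓ = 0,…,m−1: E[‖x̄_t^{ℓ+1} − x̄_*^{ℓ+1}‖²] ≤ (1 − α_t μ/2) E[‖x̄_t^{ℓ} − x̄_*^{ℓ}‖²] + 2α_t σ_shuffle² + (2α_t L²/n)(1/μ + α_t) E[‖𝐱_t^{ℓ} − 𝟏(x̄_t^{ℓ})^⊺‖²]. -/

import Mathlib

open Finset
open scoped RealInnerProductSpace

noncomputable section

namespace DRR

/-- Vectors in ℝ^p. -/
abbrev Vec (p : ℕ) := EuclideanSpace ℝ (Fin p)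

/-- Sample space: one permutation of `[m]` per agent and per epoch. -/
abbrev Omega (n m : ℕ) := ℕ → Fin n → Equiv.Perm (Fin m)

/-- Expectation of a quantity that depends only on the permutations of the first `T`
epochs: the finite uniform average over those coordinates (unused later coordinates
are frozen to the identity permutation). -/
noncomputable def expE {n m : ℕ} (T : ℕ) (g : Omega n m → ℝ) : ℝ :=
  (∑ σ : Fin T → Fin n → Equiv.Perm (Fin m),
      g fun k i => if h : k < T then σ ⟨k, h⟩ i else 1) /
    Fintype.card (Fin T → Fin n → Equiv.Perm (Fin m))

/-- Expectation over a single epoch's permutations. -/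
noncomputable def expPerm {n m : ℕ} (g : (Fin n → Equiv.Perm (Fin m)) → ℝ) : ℝ :=
  (∑ π : Fin n → Equiv.Perm (Fin m), g π) / Fintype.card (Fin n → Equiv.Perm (Fin m))

/-- Spectral norm (ℓ₂ operator norm) of W − (1/n)𝟏𝟏ᵀ. -/
noncomputable def rhoW {n : ℕ} (W : Matrix (Fin n) (Fin n) ℝ) : ℝ :=
  ‖LinearMap.toContinuousLinearMap
      (Matrix.toEuclideanLin (W - (n : ℝ)⁻¹ • Matrix.of fun _ _ => (1 : ℝ)))‖

/-- Average x̄ of the agents' vectors. -/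
noncomputable def avg {n p : ℕ} (x : Fin n → Vec p) : Vec p := (n : ℝ)⁻¹ • ∑ i, x i

/-- Squared Frobenius consensus error ‖𝐱 − 𝟏x̄ᵀ‖². -/
noncomputable def consSq {n p : ℕ} (x : Fin n → Vec p) : ℝ := ∑ i, ‖x i - avg x‖ ^ 2

/-- The "real limit points" x̄_*^ℓ = x* − α ∑_{k<ℓ} (1/n) ∑_i ∇f_{i,π_k^i}(x*). -/
noncomputable def xbarStar {n m p : ℕ} (f : Fin n → Fin m → Vec p → ℝ) (xstar : Vec p)
    (α : ℝ) (π : Fin n → Equiv.Perm (Fin m)) (ℓ : ℕ) : Vec p :=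
  xstar - α • ∑ k ∈ univ.filter fun k : Fin m => (k : ℕ) < ℓ,
    (n : ℝ)⁻¹ • ∑ i, gradient (f i (π i k)) xstar

/-- σ_*² := (1/(mn)) ∑_i ∑_ℓ ‖∇f_{i,ℓ}(x*)‖². -/
noncomputable def sigStarSq {n m p : ℕ} (f : Fin n → Fin m → Vec p → ℝ) (xstar : Vec p) : ℝ :=
  ((m : ℝ) * n)⁻¹ * ∑ i, ∑ ℓ, ‖gradient (f i ℓ) xstar‖ ^ 2

/-- The shuffling variance σ_shuffle² for stepsize α. -/
noncomputable def sigShuffleSq {n m p : ℕ} (f : Fin n → Fin m → Vec p → ℝ) (xstar : Vec p)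
    (α : ℝ) : ℝ :=
  ⨆ ℓ : Fin m, expPerm fun π =>
    ((n : ℝ)⁻¹ * ∑ i, f i (π i ℓ) (xbarStar f xstar α π ℓ))
      - ((n : ℝ)⁻¹ * ∑ i, f i (π i ℓ) xstar)
      - (inner ℝ ((n : ℝ)⁻¹ • ∑ i, gradient (f i (π i ℓ)) xstar)
          (xbarStar f xstar α π ℓ - xstar) : ℝ)

/-- Condition (A) on the stepsize. -/
def condA (ρ μ L α : ℝ) : Prop :=
  α ≤ min (Real.sqrt ((2 - ρ ^ 2) / (24 * ρ ^ 2 * (5 - ρ ^ 2))) * (1 - ρ ^ 2) / L)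
      (min ((1 - ρ ^ 2) / (2 * μ)) ((1 - ρ ^ 2) * μ / (8 * Real.sqrt 30 * L ^ 2)))

/-- The Lyapunov function H_t^ℓ. -/
noncomputable def Hfun {n m p : ℕ} (W : Matrix (Fin n) (Fin n) ℝ)
    (f : Fin n → Fin m → Vec p → ℝ) (xstar : Vec p) (μ L : ℝ) (α : ℕ → ℝ)
    (x : Omega n m → ℕ → ℕ → Fin n → Vec p) (t ℓ : ℕ) : ℝ :=
  expE (t + 1) (fun ω => ‖avg (x ω t ℓ) - xbarStar f xstar (α t) (ω t) ℓ‖ ^ 2)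
    + (16 * α t * L ^ 2 / (n * μ * (1 - rhoW W ^ 2)))
        * expE (t + 1) (fun ω => consSq (x ω t ℓ))



section Aux
variable {p : ℕ}


lemma breg_sub_eq_integral (g : Vec p → ℝ) (G : Vec p → Vec p)
    (hg : ∀ x, HasGradientAt g (G x) x) (hGc : Continuous G) (u v : Vec p) :
    g u - g v = ∫ s in (0:ℝ)..1, ⟪G (v + s • (u - v)), u - v⟫ := by
  have hpath : ∀ s : ℝ, HasDerivAt (fun s : ℝ => v + s • (u - v)) (u - v) s := by
    intro s
    simpa using ((hasDerivAt_id s).smul_const (u - v)).const_add v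
  have hφ : ∀ s : ℝ, HasDerivAt (fun s : ℝ => g (v + s • (u - v)))
      ⟪G (v + s • (u - v)), u - v⟫ s := by
    intro s
    have := ((hg (v + s • (u - v))).hasFDerivAt).comp_hasDerivAt s (hpath s)
    simpa [InnerProductSpace.toDual_apply_apply, Function.comp_def] using this
  have hint : IntervalIntegrable (fun s : ℝ => ⟪G (v + s • (u - v)), u - v⟫)
      MeasureTheory.volume 0 1 :=
    ((hGc.comp (by continuity)).inner continuous_const).intervalIntegrable 0 1
  have := intervalIntegral.integral_eq_sub_of_hasDerivAt (f := fun s : ℝ => g (v + s • (u - v)))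
    (fun s _ => hφ s) hint
  simpa using this.symm

lemma breg_eq_integral (g : Vec p → ℝ) (G : Vec p → Vec p)
    (hg : ∀ x, HasGradientAt g (G x) x) (hGc : Continuous G) (u v : Vec p) :
    g u - g v - ⟪G v, u - v⟫
      = ∫ s in (0:ℝ)..1, ⟪G (v + s • (u - v)) - G v, u - v⟫ := by
  have h1 := breg_sub_eq_integral g G hg hGc u v
  have hint : IntervalIntegrable (fun s : ℝ => ⟪G (v + s • (u - v)), u - v⟫)
      MeasureTheory.volume 0 1 :=
    ((hGc.comp (by continuity)).inner continuous_const).intervalIntegrable 0 1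
  have h2 : ∫ s in (0:ℝ)..1, ⟪G (v + s • (u - v)) - G v, u - v⟫
      = (∫ s in (0:ℝ)..1, ⟪G (v + s • (u - v)), u - v⟫) - ∫ s in (0:ℝ)..1, ⟪G v, u - v⟫ := by
    rw [← intervalIntegral.integral_sub hint (intervalIntegrable_const)]
    congr 1; funext s; rw [inner_sub_left]
  rw [h2, intervalIntegral.integral_const]
  simp [h1]

lemma breg_lower (g : Vec p → ℝ) (G : Vec p → Vec p) (μ : ℝ)
    (hg : ∀ x, HasGradientAt g (G x) x) (hGc : Continuous G)
    (hmono : ∀ x y, μ * ‖x - y‖ ^ 2 ≤ ⟪G x - G y, x - y⟫) (u v : Vec p) :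
    μ / 2 * ‖u - v‖ ^ 2 ≤ g u - g v - ⟪G v, u - v⟫ := by
  rw [breg_eq_integral g G hg hGc u v]
  have hint : IntervalIntegrable (fun s : ℝ => ⟪G (v + s • (u - v)) - G v, u - v⟫)
      MeasureTheory.volume 0 1 :=
    (((hGc.comp (by continuity)).sub continuous_const).inner continuous_const).intervalIntegrable 0 1
  have hlow : ∀ s ∈ Set.Icc (0:ℝ) 1,
      μ * s * ‖u - v‖ ^ 2 ≤ ⟪G (v + s • (u - v)) - G v, u - v⟫ := by
    intro s hs
    have h := hmono (v + s • (u - v)) v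
    rw [add_sub_cancel_left] at h
    rw [real_inner_smul_right] at h
    rw [norm_smul, Real.norm_eq_abs] at h
    rcases eq_or_lt_of_le hs.1 with h0 | h0
    · simp [← h0]
    · rw [abs_of_pos h0] at h
      nlinarith [h, h0]
  have hmono' := intervalIntegral.integral_mono_on (by norm_num : (0:ℝ) ≤ 1)
    ((by continuity : Continuous fun s : ℝ => μ * s * ‖u - v‖ ^ 2).intervalIntegrable 0 1) hint hlow
  have hval : ∫ s in (0:ℝ)..1, μ * s * ‖u - v‖ ^ 2 = μ / 2 * ‖u - v‖ ^ 2 := by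
    have : (fun s : ℝ => μ * s * ‖u - v‖ ^ 2) = fun s : ℝ => (μ * ‖u - v‖ ^ 2) * s := by
      funext s; ring
    rw [this, intervalIntegral.integral_const_mul, integral_id]
    ring
  linarith [hmono', hval.ge, hval.le]

lemma breg_upper (g : Vec p → ℝ) (G : Vec p → Vec p) (L : ℝ) (hL : 0 ≤ L)
    (hg : ∀ x, HasGradientAt g (G x) x) (hGc : Continuous G)
    (hlip : ∀ x y, ‖G x - G y‖ ≤ L * ‖x - y‖) (u v : Vec p) :
    g u - g v - ⟪G v, u - v⟫ ≤ L / 2 * ‖u - v‖ ^ 2 := by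
  rw [breg_eq_integral g G hg hGc u v]
  have hint : IntervalIntegrable (fun s : ℝ => ⟪G (v + s • (u - v)) - G v, u - v⟫)
      MeasureTheory.volume 0 1 :=
    (((hGc.comp (by continuity)).sub continuous_const).inner continuous_const).intervalIntegrable 0 1
  have hup : ∀ s ∈ Set.Icc (0:ℝ) 1,
      ⟪G (v + s • (u - v)) - G v, u - v⟫ ≤ L * s * ‖u - v‖ ^ 2 := by
    intro s hs
    have h1 := real_inner_le_norm (G (v + s • (u - v)) - G v) (u - v)
    have h2 := hlip (v + s • (u - v)) v
    rw [add_sub_cancel_left, norm_smul, Real.norm_eq_abs, abs_of_nonneg hs.1] at h2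
    nlinarith [norm_nonneg (u - v), hs.1, norm_nonneg (G (v + s • (u - v)) - G v)]
  have hmono' := intervalIntegral.integral_mono_on (by norm_num : (0:ℝ) ≤ 1)
    hint ((by continuity : Continuous fun s : ℝ => L * s * ‖u - v‖ ^ 2).intervalIntegrable 0 1) hup
  have hval : ∫ s in (0:ℝ)..1, L * s * ‖u - v‖ ^ 2 = L / 2 * ‖u - v‖ ^ 2 := by
    have : (fun s : ℝ => L * s * ‖u - v‖ ^ 2) = fun s : ℝ => (L * ‖u - v‖ ^ 2) * s := by
      funext s; ring
    rw [this, intervalIntegral.integral_const_mul, integral_id]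
    ring
  linarith [hmono', hval.le]


lemma lip_continuous (G : Vec p → Vec p) (L : ℝ)
    (hlip : ∀ x y, ‖G x - G y‖ ≤ L * ‖x - y‖) : Continuous G := by
  have : LipschitzWith L.toNNReal G := by
    apply LipschitzWith.of_dist_le_mul
    intro x y
    rw [dist_eq_norm, dist_eq_norm]
    exact le_trans (hlip x y) (mul_le_mul_of_nonneg_right (Real.le_coe_toNNReal L) (norm_nonneg _))
  exact this.continuous

lemma breg_coco (g : Vec p → ℝ) (G : Vec p → Vec p) (L : ℝ) (hL : 0 < L)
    (hg : ∀ x, HasGradientAt g (G x) x) (hGc : Continuous G)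
    (hmono0 : ∀ x y, (0:ℝ) * ‖x - y‖ ^ 2 ≤ ⟪G x - G y, x - y⟫)
    (hlip : ∀ x y, ‖G x - G y‖ ≤ L * ‖x - y‖) (u v : Vec p) :
    (2 * L)⁻¹ * ‖G u - G v‖ ^ 2 ≤ g u - g v - ⟪G v, u - v⟫ := by
  set Δ := G u - G v with hΔdef
  set w := u - L⁻¹ • Δ with hwdef
  have hwu : w - u = -(L⁻¹ • Δ) := sub_sub_cancel_left u (L⁻¹ • Δ)
  have hwv : w - v = (u - v) - L⁻¹ • Δ := sub_right_comm u (L⁻¹ • Δ) v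
  have h1 := breg_upper g G L hL.le hg hGc hlip w u
  have h2 := breg_lower g G 0 hg hGc hmono0 w v
  rw [hwu] at h1
  rw [hwv] at h2
  rw [inner_neg_right, real_inner_smul_right, norm_neg, norm_smul, Real.norm_eq_abs,
    abs_of_pos (inv_pos.mpr hL)] at h1
  rw [inner_sub_right, real_inner_smul_right] at h2
  have hΔ : ⟪G u, Δ⟫ - ⟪G v, Δ⟫ = ‖Δ‖ ^ 2 := by
    rw [← inner_sub_left, ← hΔdef, real_inner_self_eq_norm_sq]
  have hc1 : L / 2 * (L⁻¹ * ‖Δ‖) ^ 2 = L⁻¹ * ‖Δ‖ ^ 2 / 2 := by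
    field_simp
  have hc2 : (2 * L)⁻¹ = L⁻¹ / 2 := by
    rw [mul_inv]; ring
  rw [hc1] at h1
  have hΔ' : L⁻¹ * ⟪G u, Δ⟫ - L⁻¹ * ⟪G v, Δ⟫ = L⁻¹ * ‖Δ‖ ^ 2 := by
    rw [← mul_sub, hΔ]
  rw [hc2]
  linarith [h1, h2, hΔ']
set_option maxHeartbeats 1000000 in
lemma core (F : Vec p → ℝ) (G : Vec p → Vec p) (μ L α Econs : ℝ)
    (hμ : 0 < μ) (hμL : μ ≤ L)
    (hFgrad : ∀ x, HasGradientAt F (G x) x)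
    (hmono : ∀ a b, μ * ‖a - b‖ ^ 2 ≤ ⟪G a - G b, a - b⟫)
    (hlip : ∀ a b, ‖G a - G b‖ ≤ L * ‖a - b‖)
    (hα : 0 < α) (hα2L : α ≤ 1 / (2 * L))
    (u s v P : Vec p)
    (hP : ‖P - G u‖ ^ 2 ≤ Econs) :
    ‖(u - α • P) - (s - α • G v)‖ ^ 2
      ≤ (1 - α * μ / 2) * ‖u - s‖ ^ 2 + 2 * α * (F s - F v - ⟪G v, s - v⟫)
        + (2 * α / μ + 2 * α ^ 2) * Econs := by
  have hL : 0 < L := lt_of_lt_of_le hμ hμL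
  have hGc : Continuous G := lip_continuous G L hlip
  have hmono0 : ∀ a b, (0:ℝ) * ‖a - b‖ ^ 2 ≤ ⟪G a - G b, a - b⟫ := fun a b => by
    have := hmono a b; nlinarith [sq_nonneg ‖a - b‖, hμ.le]
  set d := u - s with hd
  set e := P - G u with he
  set Δ := G u - G v with hΔ
  set a := ‖d‖ with ha
  set b := ‖e‖ with hb
  set c := ‖Δ‖ with hc
  have h2αL : α * (2 * L) ≤ 1 := by
    rwa [le_div_iff₀ (by positivity)] at hα2L
  -- the displacement identity
  have hd' : (u - α • P) - (s - α • G v) = (d - α • Δ) - α • e := by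
    rw [hd, hΔ, he, smul_sub, smul_sub]; abel
  -- three-point identity
  have H2 : ⟪d, Δ⟫ = (F s - F u - ⟪G u, s - u⟫) + (F u - F v - ⟪G v, u - v⟫)
      - (F s - F v - ⟪G v, s - v⟫) := by
    rw [hd, hΔ]
    simp only [inner_sub_left, inner_sub_right]
    rw [real_inner_comm u (G u), real_inner_comm s (G u), real_inner_comm u (G v),
      real_inner_comm s (G v)]
    ring
  have B1 := breg_lower F G μ hFgrad hGc hmono s u
  have B2 := breg_coco F G L hL hFgrad hGc hmono0 hlip u v
  have hsu : ‖s - u‖ = a := by rw [ha, hd, norm_sub_rev]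
  rw [hsu] at B1
  rw [← hΔ] at B2
  clear_value d e Δ
  -- expansion of the squared norm
  have H1 : ‖(u - α • P) - (s - α • G v)‖ ^ 2
      = a ^ 2 - 2 * α * ⟪d, Δ⟫ + α ^ 2 * c ^ 2
        - 2 * α * ⟪d, e⟫ + 2 * α ^ 2 * ⟪Δ, e⟫ + α ^ 2 * b ^ 2 := by
    rw [hd', @norm_sub_sq_real, @norm_sub_sq_real]
    simp only [inner_sub_left, real_inner_smul_left, real_inner_smul_right, norm_smul,
      Real.norm_eq_abs, mul_pow, sq_abs]
    ring
  -- scaled versions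
  have f3' : c ^ 2 ≤ 2 * L * (F u - F v - ⟪G v, u - v⟫) := by
    have h := mul_le_mul_of_nonneg_left B2 (by positivity : (0:ℝ) ≤ 2 * L)
    rw [← mul_assoc, mul_inv_cancel₀ (by positivity : (2*L) ≠ 0), one_mul] at h
    exact h
  have h4 : 2 * (α / (2 * L)) * c ^ 2 ≤ 2 * α * (F u - F v - ⟪G v, u - v⟫) := by
    have h := mul_le_mul_of_nonneg_left f3' (by positivity : (0:ℝ) ≤ α / (2 * L))
    have hid : α / (2 * L) * (2 * L * (F u - F v - ⟪G v, u - v⟫))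
        = 2 * α * (F u - F v - ⟪G v, u - v⟫) / 2 := by
      field_simp
    linarith [h, hid]
  have h5 : - ⟪d, e⟫ ≤ a * b := by
    have := abs_real_inner_le_norm d e; rw [← ha, ← hb] at this
    cases abs_le.mp this with
    | intro h1 h2 => linarith
  have h6 : ⟪Δ, e⟫ ≤ c * b := by
    have := abs_real_inner_le_norm Δ e; rw [← hc, ← hb] at this
    cases abs_le.mp this with
    | intro h1 h2 => linarith
  -- Young inequalities
  have e1 : α * μ / 2 * a ^ 2 + (2 * α / μ) * b ^ 2 - 2 * α * (a * b)
      = (α / (2 * μ)) * (μ * a - 2 * b) ^ 2 := by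
    field_simp; ring
  have y1 : 2 * α * (a * b) ≤ α * μ / 2 * a ^ 2 + (2 * α / μ) * b ^ 2 := by
    nlinarith [e1, mul_nonneg (by positivity : (0:ℝ) ≤ α / (2 * μ)) (sq_nonneg (μ * a - 2 * b))]
  have e2 : (α / (2 * L)) * c ^ 2 + 2 * α ^ 3 * L * b ^ 2 - 2 * α ^ 2 * (c * b)
      = (α / (2 * L)) * (c - 2 * α * L * b) ^ 2 := by
    field_simp; ring
  have y2 : 2 * α ^ 2 * (c * b) ≤ (α / (2 * L)) * c ^ 2 + 2 * α ^ 3 * L * b ^ 2 := by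
    nlinarith [e2, mul_nonneg (by positivity : (0:ℝ) ≤ α / (2 * L)) (sq_nonneg (c - 2 * α * L * b))]
  have h7 : α ^ 2 * c ^ 2 ≤ (α / (2 * L)) * c ^ 2 := by
    have hαsq : α ^ 2 ≤ α / (2 * L) := by
      rw [le_div_iff₀ (by positivity)]
      nlinarith [h2αL, hα]
    exact mul_le_mul_of_nonneg_right hαsq (sq_nonneg c)
  have h8 : 2 * α ^ 3 * L * b ^ 2 ≤ α ^ 2 * b ^ 2 := by
    nlinarith [mul_le_mul_of_nonneg_left h2αL (by positivity : (0:ℝ) ≤ α ^ 2 * b ^ 2)]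
  have hb2 : b ^ 2 ≤ Econs := hP
  have h10 : (2 * α / μ + 2 * α ^ 2) * b ^ 2 ≤ (2 * α / μ + 2 * α ^ 2) * Econs :=
    mul_le_mul_of_nonneg_left hb2 (by positivity)
  -- scaled three point identity and strong convexity
  have H2' : 2 * α * ⟪d, Δ⟫ = 2 * α * (F s - F u - ⟪G u, s - u⟫)
      + 2 * α * (F u - F v - ⟪G v, u - v⟫) - 2 * α * (F s - F v - ⟪G v, s - v⟫) := by
    rw [H2]; ring
  have h3 : 2 * α * (μ / 2 * a ^ 2) ≤ 2 * α * (F s - F u - ⟪G u, s - u⟫) :=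
    mul_le_mul_of_nonneg_left B1 (by positivity)
  have h5' : - (2 * α * ⟪d, e⟫) ≤ 2 * α * (a * b) := by
    have := mul_le_mul_of_nonneg_left h5 (by positivity : (0:ℝ) ≤ 2 * α)
    linarith
  have h6' : 2 * α ^ 2 * ⟪Δ, e⟫ ≤ 2 * α ^ 2 * (c * b) :=
    mul_le_mul_of_nonneg_left h6 (by positivity)
  linarith [H1.le, H1.ge, H2', h3, h4, h5', h6', y1, y2, h7, h8, h10]

end Aux

section Aux2
variable {n m : ℕ} {T : ℕ}

lemma expE_add (g h : (ℕ → Fin n → Equiv.Perm (Fin m)) → ℝ) :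
    expE T (fun ω => g ω + h ω) = expE T g + expE T h := by
  simp only [expE, Finset.sum_add_distrib, add_div]

lemma expE_const_mul (a : ℝ) (g : (ℕ → Fin n → Equiv.Perm (Fin m)) → ℝ) :
    expE T (fun ω => a * g ω) = a * expE T g := by
  simp only [expE, ← Finset.mul_sum]; rw [mul_div_assoc]

lemma expE_mono {g h : (ℕ → Fin n → Equiv.Perm (Fin m)) → ℝ}
    (hgh : ∀ ω, g ω ≤ h ω) : expE T g ≤ expE T h := by
  unfold expE
  have hc : (0:ℝ) < (Fintype.card (Fin T → Fin n → Equiv.Perm (Fin m)) : ℝ) := by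
    exact_mod_cast Fintype.card_pos
  exact (div_le_div_iff_of_pos_right hc).mpr (Finset.sum_le_sum fun σ _ => hgh _)

lemma marg_aux {X : Type*} [Fintype X] [DecidableEq X] [Nonempty X] {T : ℕ}
    (i : Fin T) (h : X → ℝ) :
    (∑ σ : Fin T → X, h (σ i)) / (Fintype.card (Fin T → X) : ℝ)
      = (∑ π : X, h π) / (Fintype.card X : ℝ) := by
  classical
  have hsum : ∑ σ : Fin T → X, h (σ i)
      = ∑ q : X × ({j : Fin T // j ≠ i} → X), h q.1 :=
    Fintype.sum_equiv (Equiv.funSplitAt i X) _ _ (fun _ => rfl)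
  have hcard : Fintype.card (Fin T → X)
      = Fintype.card X * Fintype.card ({j : Fin T // j ≠ i} → X) := by
    rw [Fintype.card_congr (Equiv.funSplitAt i X), Fintype.card_prod]
  rw [hsum, Fintype.sum_prod_type, hcard]
  simp only [Finset.sum_const, Finset.card_univ, nsmul_eq_mul]
  rw [← Finset.mul_sum]
  have hB : (0:ℝ) < Fintype.card ({j : Fin T // j ≠ i} → X) := by
    exact_mod_cast Fintype.card_pos
  rw [Nat.cast_mul, mul_comm ((Fintype.card X : ℝ)) _,
    mul_div_mul_left _ _ hB.ne']

lemma expE_coord {t : ℕ} (ht : t < T) (h : (Fin n → Equiv.Perm (Fin m)) → ℝ) :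
    expE T (fun ω => h (ω t)) = expPerm h := by
  unfold expE expPerm
  beta_reduce
  have hfun : ∀ σ : Fin T → Fin n → Equiv.Perm (Fin m),
      (fun i => if hh : t < T then σ ⟨t, hh⟩ i else 1) = σ ⟨t, ht⟩ :=
    fun σ => funext fun i => dif_pos ht
  simp only [hfun]
  exact marg_aux ⟨t, ht⟩ h


end Aux2

section Aux3
variable {n p : ℕ}
lemma avg_hasGradient (g : Fin n → Vec p → ℝ) (hg : ∀ i, Differentiable ℝ (g i)) (y : Vec p) :
    HasGradientAt (fun z => (n:ℝ)⁻¹ * ∑ i, g i z) ((n:ℝ)⁻¹ • ∑ i, gradient (g i) y) y := by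
  rw [hasGradientAt_iff_hasFDerivAt]
  have hsum : HasFDerivAt (fun z => ∑ i, g i z)
      (∑ i, (InnerProductSpace.toDual ℝ (Vec p)) (gradient (g i) y)) y :=
    HasFDerivAt.fun_sum fun i _ => ((hg i y).hasGradientAt).hasFDerivAt
  simpa [map_smul, map_sum] using hsum.const_mul ((n:ℝ)⁻¹)

lemma avg_G_sub (D : Fin n → Vec p → Vec p) (a b : Vec p) :
    ((n:ℝ)⁻¹ • ∑ i, D i a) - ((n:ℝ)⁻¹ • ∑ i, D i b) = (n:ℝ)⁻¹ • ∑ i, (D i a - D i b) := by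
  rw [← smul_sub, ← Finset.sum_sub_distrib]

lemma avg_mono (hn : 0 < n) (g : Fin n → Vec p → ℝ) (μ : ℝ)
    (hstrong : ∀ i (x y : Vec p),
      μ * ‖x - y‖ ^ 2 ≤ ⟪gradient (g i) x - gradient (g i) y, x - y⟫) (a b : Vec p) :
    μ * ‖a - b‖ ^ 2 ≤ ⟪((n:ℝ)⁻¹ • ∑ i, gradient (g i) a) - ((n:ℝ)⁻¹ • ∑ i, gradient (g i) b),
      a - b⟫ := by
  rw [avg_G_sub, real_inner_smul_left, sum_inner]
  have h1 : (n:ℝ) * (μ * ‖a - b‖ ^ 2) ≤ ∑ i, ⟪gradient (g i) a - gradient (g i) b, a - b⟫ := by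
    calc (n:ℝ) * (μ * ‖a - b‖ ^ 2) = ∑ _i : Fin n, μ * ‖a - b‖ ^ 2 := by
          rw [Finset.sum_const, card_univ, Fintype.card_fin, nsmul_eq_mul]
      _ ≤ _ := Finset.sum_le_sum fun i _ => hstrong i a b
  have hn' : (0:ℝ) < n := by exact_mod_cast hn
  calc μ * ‖a - b‖ ^ 2 = (n:ℝ)⁻¹ * ((n:ℝ) * (μ * ‖a - b‖ ^ 2)) := by
        field_simp
    _ ≤ (n:ℝ)⁻¹ * ∑ i, ⟪gradient (g i) a - gradient (g i) b, a - b⟫ :=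
        mul_le_mul_of_nonneg_left h1 (by positivity)

lemma avg_lip (hn : 0 < n) (g : Fin n → Vec p → ℝ) (L : ℝ)
    (hsmooth : ∀ i (x y : Vec p), ‖gradient (g i) x - gradient (g i) y‖ ≤ L * ‖x - y‖)
    (a b : Vec p) :
    ‖((n:ℝ)⁻¹ • ∑ i, gradient (g i) a) - ((n:ℝ)⁻¹ • ∑ i, gradient (g i) b)‖
      ≤ L * ‖a - b‖ := by
  rw [avg_G_sub, norm_smul, Real.norm_eq_abs, abs_of_nonneg (by positivity : (0:ℝ) ≤ (n:ℝ)⁻¹)]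
  have hn' : (0:ℝ) < n := by exact_mod_cast hn
  calc (n:ℝ)⁻¹ * ‖∑ i, (gradient (g i) a - gradient (g i) b)‖
      ≤ (n:ℝ)⁻¹ * ∑ i, ‖gradient (g i) a - gradient (g i) b‖ :=
        mul_le_mul_of_nonneg_left (norm_sum_le _ _) (by positivity)
    _ ≤ (n:ℝ)⁻¹ * ∑ _i : Fin n, L * ‖a - b‖ :=
        mul_le_mul_of_nonneg_left (Finset.sum_le_sum fun i _ => hsmooth i a b) (by positivity)
    _ = L * ‖a - b‖ := by
        rw [Finset.sum_const, card_univ, Fintype.card_fin, nsmul_eq_mul]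
        field_simp

lemma avg_norm_sq_le (hn : 0 < n) (D : Fin n → Vec p) (r : Fin n → ℝ)
    (hr : ∀ i, ‖D i‖ ≤ r i) :
    ‖(n:ℝ)⁻¹ • ∑ i, D i‖ ^ 2 ≤ (n:ℝ)⁻¹ * ∑ i, (r i) ^ 2 := by
  have hn' : (0:ℝ) < n := by exact_mod_cast hn
  have h1 : ‖(n:ℝ)⁻¹ • ∑ i, D i‖ ≤ (n:ℝ)⁻¹ * ∑ i, r i := by
    rw [norm_smul, Real.norm_eq_abs, abs_of_nonneg (by positivity : (0:ℝ) ≤ (n:ℝ)⁻¹)]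
    exact mul_le_mul_of_nonneg_left
      ((norm_sum_le _ _).trans (Finset.sum_le_sum fun i _ => hr i)) (by positivity)
  have h2 : (∑ i, r i) ^ 2 ≤ (n:ℝ) * ∑ i, (r i) ^ 2 := by
    have := sq_sum_le_card_mul_sum_sq (s := (univ : Finset (Fin n))) (f := r)
    simpa [card_univ] using this
  have h3 : ‖(n:ℝ)⁻¹ • ∑ i, D i‖ ^ 2 ≤ ((n:ℝ)⁻¹ * ∑ i, r i) ^ 2 := by
    apply pow_le_pow_left₀ (norm_nonneg _) h1
  calc ‖(n:ℝ)⁻¹ • ∑ i, D i‖ ^ 2 ≤ ((n:ℝ)⁻¹ * ∑ i, r i) ^ 2 := h3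
    _ = (n:ℝ)⁻¹ * (n:ℝ)⁻¹ * (∑ i, r i) ^ 2 := by ring
    _ ≤ (n:ℝ)⁻¹ * (n:ℝ)⁻¹ * ((n:ℝ) * ∑ i, (r i) ^ 2) := by
        apply mul_le_mul_of_nonneg_left h2 (by positivity)
    _ = (n:ℝ)⁻¹ * ∑ i, (r i) ^ 2 := by
        field_simp

end Aux3

/-- **Lemma 5.** If α_t ≤ 1/(2L), then for all epochs t and all ℓ = 0,…,m−1,
E‖x̄_t^{ℓ+1} − x̄_*^{ℓ+1}‖² ≤ (1 − α_t μ/2) E‖x̄_t^ℓ − x̄_*^ℓ‖² + 2 α_t σ_shuffle²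
  + (2 α_t L²/n)(1/μ + α_t) E‖𝐱_t^ℓ − 𝟏(x̄_t^ℓ)ᵀ‖². -/
theorem drr_lemma5
    (n m p : ℕ) (hn : 0 < n) (hm : 0 < m)
    (W : Matrix (Fin n) (Fin n) ℝ)
    (hWpos : ∀ i j, 0 ≤ W i j) (hWsymm : W.IsSymm) (hWstoch : ∀ i, ∑ j, W i j = 1)
    (hρ : rhoW W < 1)
    (μ L : ℝ) (hμ : 0 < μ) (hμL : μ ≤ L)
    (f : Fin n → Fin m → Vec p → ℝ)
    (hdiff : ∀ i ℓ, Differentiable ℝ (f i ℓ))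
    (hstrong : ∀ i ℓ (x y : Vec p),
      μ * ‖x - y‖ ^ 2 ≤ inner ℝ (gradient (f i ℓ) x - gradient (f i ℓ) y) (x - y))
    (hsmooth : ∀ i ℓ (x y : Vec p),
      ‖gradient (f i ℓ) x - gradient (f i ℓ) y‖ ≤ L * ‖x - y‖)
    (xstar : Vec p)
    (hmin : ∀ y : Vec p,
      ((m : ℝ) * n)⁻¹ * ∑ i, ∑ ℓ, f i ℓ xstar ≤ ((m : ℝ) * n)⁻¹ * ∑ i, ∑ ℓ, f i ℓ y)
    (α : ℕ → ℝ) (hαpos : ∀ t, 0 < α t)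
    (x0 : Fin n → Vec p)
    (x : Omega n m → ℕ → ℕ → Fin n → Vec p)
    (hxinit : ∀ ω i, x ω 0 0 i = x0 i)
    (hxstep : ∀ ω t (ℓ : Fin m) i, x ω t ((ℓ : ℕ) + 1) i
      = ∑ j, W i j • (x ω t (ℓ : ℕ) j - α t • gradient (f j (ω t j ℓ)) (x ω t (ℓ : ℕ) j)))
    (hxepoch : ∀ ω t i, x ω (t + 1) 0 i = x ω t m i)
    (hα2L : ∀ t, α t ≤ 1 / (2 * L)) :
    ∀ (t : ℕ) (ℓ : Fin m),
      expE (t + 1) (fun ω =>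
          ‖avg (x ω t ((ℓ : ℕ) + 1)) - xbarStar f xstar (α t) (ω t) ((ℓ : ℕ) + 1)‖ ^ 2)
        ≤ (1 - α t * μ / 2) * expE (t + 1) (fun ω =>
              ‖avg (x ω t (ℓ : ℕ)) - xbarStar f xstar (α t) (ω t) (ℓ : ℕ)‖ ^ 2)
          + 2 * α t * sigShuffleSq f xstar (α t)
          + (2 * α t * L ^ 2 / n) * (1 / μ + α t)
              * expE (t + 1) (fun ω => consSq (x ω t (ℓ : ℕ))) := by
  intro t ℓ
  have hLpos : 0 < L := lt_of_lt_of_le hμ hμL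
  set Df : (Fin n → Equiv.Perm (Fin m)) → ℝ := fun π =>
    ((n : ℝ)⁻¹ * ∑ i, f i (π i ℓ) (xbarStar f xstar (α t) π ℓ))
      - ((n : ℝ)⁻¹ * ∑ i, f i (π i ℓ) xstar)
      - (inner ℝ ((n : ℝ)⁻¹ • ∑ i, gradient (f i (π i ℓ)) xstar)
          (xbarStar f xstar (α t) π ℓ - xstar) : ℝ) with hDf
  have havg : ∀ ω : Omega n m, avg (x ω t ((ℓ:ℕ)+1))
      = avg (x ω t (ℓ:ℕ))
        - α t • ((n:ℝ)⁻¹ • ∑ j, gradient (f j (ω t j ℓ)) (x ω t (ℓ:ℕ) j)) := by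
    intro ω
    unfold avg
    rw [Finset.sum_congr rfl fun i _ => hxstep ω t ℓ i, Finset.sum_comm]
    have hcol : ∀ j : Fin n, (∑ i, W i j) = 1 := by
      intro j
      have hsym : ∀ i, W i j = W j i := by
        intro i
        have := congrFun (congrFun hWsymm j) i
        simpa [Matrix.transpose_apply] using this
      rw [Finset.sum_congr rfl fun i _ => hsym i]
      exact hWstoch j
    have hone : ∀ j : Fin n,
        (∑ i, W i j • (x ω t (ℓ:ℕ) j - α t • gradient (f j (ω t j ℓ)) (x ω t (ℓ:ℕ) j)))
          = x ω t (ℓ:ℕ) j - α t • gradient (f j (ω t j ℓ)) (x ω t (ℓ:ℕ) j) := by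
      intro j
      rw [← Finset.sum_smul, hcol j, one_smul]
    rw [Finset.sum_congr rfl fun j _ => hone j, Finset.sum_sub_distrib, smul_sub]
    congr 1
    rw [← Finset.smul_sum]
    exact smul_comm _ _ _
  have hstar : ∀ π : Fin n → Equiv.Perm (Fin m),
      xbarStar f xstar (α t) π ((ℓ:ℕ)+1)
        = xbarStar f xstar (α t) π (ℓ:ℕ)
          - α t • ((n:ℝ)⁻¹ • ∑ i, gradient (f i (π i ℓ)) xstar) := by
    intro π
    unfold xbarStar
    have hset : (univ.filter fun k : Fin m => (k : ℕ) < (ℓ:ℕ)+1)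
        = insert ℓ (univ.filter fun k : Fin m => (k : ℕ) < (ℓ:ℕ)) := by
      ext k
      simp only [mem_filter, mem_univ, true_and, mem_insert]
      rw [Nat.lt_succ_iff_lt_or_eq]
      constructor
      · rintro (h | h)
        · exact Or.inr h
        · exact Or.inl (Fin.ext h)
      · rintro (h | h)
        · exact Or.inr (by rw [h])
        · exact Or.inl h
    rw [hset, Finset.sum_insert (by simp), smul_add]
    abel
  have hcore : ∀ ω : Omega n m,
      ‖avg (x ω t ((ℓ:ℕ)+1)) - xbarStar f xstar (α t) (ω t) ((ℓ:ℕ)+1)‖ ^ 2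
        ≤ (1 - α t * μ / 2) * ‖avg (x ω t (ℓ:ℕ)) - xbarStar f xstar (α t) (ω t) (ℓ:ℕ)‖ ^ 2
          + (2 * α t * Df (ω t)
            + ((2 * α t * L ^ 2 / n) * (1 / μ + α t)) * consSq (x ω t (ℓ:ℕ))) := by
    intro ω
    rw [havg ω, hstar (ω t)]
    have hPbound : ‖((n:ℝ)⁻¹ • ∑ j, gradient (f j (ω t j ℓ)) (x ω t (ℓ:ℕ) j))
        - ((n:ℝ)⁻¹ • ∑ i, gradient (f i (ω t i ℓ)) (avg (x ω t (ℓ:ℕ))))‖ ^ 2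
        ≤ L ^ 2 / (n:ℝ) * consSq (x ω t (ℓ:ℕ)) := by
      rw [← smul_sub, ← Finset.sum_sub_distrib]
      have h := avg_norm_sq_le hn
        (fun j => gradient (f j (ω t j ℓ)) (x ω t (ℓ:ℕ) j)
          - gradient (f j (ω t j ℓ)) (avg (x ω t (ℓ:ℕ))))
        (fun j => L * ‖x ω t (ℓ:ℕ) j - avg (x ω t (ℓ:ℕ))‖)
        (fun j => hsmooth j (ω t j ℓ) _ _)
      refine h.trans (le_of_eq ?_)
      unfold consSq
      rw [Finset.mul_sum, Finset.mul_sum]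
      refine Finset.sum_congr rfl fun i _ => ?_
      rw [mul_pow]; ring
    have hc := core (fun z => (n:ℝ)⁻¹ * ∑ i, f i (ω t i ℓ) z)
      (fun y => (n:ℝ)⁻¹ • ∑ i, gradient (f i (ω t i ℓ)) y)
      μ L (α t) (L ^ 2 / (n:ℝ) * consSq (x ω t (ℓ:ℕ))) hμ hμL
      (fun y => avg_hasGradient _ (fun i => hdiff i (ω t i ℓ)) y)
      (fun a b => avg_mono hn _ μ (fun i => hstrong i (ω t i ℓ)) a b)
      (fun a b => avg_lip hn _ L (fun i => hsmooth i (ω t i ℓ)) a b)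
      (hαpos t) (hα2L t)
      (avg (x ω t (ℓ:ℕ))) (xbarStar f xstar (α t) (ω t) (ℓ:ℕ)) xstar
      ((n:ℝ)⁻¹ • ∑ j, gradient (f j (ω t j ℓ)) (x ω t (ℓ:ℕ) j)) hPbound
    beta_reduce at hc
    simp only [hDf]
    refine le_trans hc (le_of_eq ?_)
    ring
  calc expE (t+1) (fun ω =>
        ‖avg (x ω t ((ℓ:ℕ)+1)) - xbarStar f xstar (α t) (ω t) ((ℓ:ℕ)+1)‖ ^ 2)
      ≤ expE (t+1) (fun ω =>
          (1 - α t * μ / 2) * ‖avg (x ω t (ℓ:ℕ)) - xbarStar f xstar (α t) (ω t) (ℓ:ℕ)‖ ^ 2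
          + (2 * α t * Df (ω t)
            + ((2 * α t * L ^ 2 / n) * (1 / μ + α t)) * consSq (x ω t (ℓ:ℕ)))) :=
        expE_mono fun ω => hcore ω
    _ = (1 - α t * μ / 2) * expE (t+1)
          (fun ω => ‖avg (x ω t (ℓ:ℕ)) - xbarStar f xstar (α t) (ω t) (ℓ:ℕ)‖ ^ 2)
        + (2 * α t * expE (t+1) (fun ω => Df (ω t))
          + ((2 * α t * L ^ 2 / n) * (1 / μ + α t))
              * expE (t+1) (fun ω => consSq (x ω t (ℓ:ℕ)))) := by
        rw [expE_add, expE_add, expE_const_mul, expE_const_mul, expE_const_mul]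
    _ ≤ (1 - α t * μ / 2) * expE (t+1) (fun ω =>
              ‖avg (x ω t (ℓ:ℕ)) - xbarStar f xstar (α t) (ω t) (ℓ:ℕ)‖ ^ 2)
          + 2 * α t * sigShuffleSq f xstar (α t)
          + (2 * α t * L ^ 2 / n) * (1 / μ + α t)
              * expE (t+1) (fun ω => consSq (x ω t (ℓ:ℕ))) := by
        have h1 : expE (t+1) (fun ω => Df (ω t)) = expPerm Df :=
          expE_coord (Nat.lt_succ_self t) Df
        have h2 : expPerm Df ≤ sigShuffleSq f xstar (α t) := by
          rw [hDf]
          unfold sigShuffleSq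
          exact le_ciSup (f := fun ℓ : Fin m => expPerm fun π =>
              ((n : ℝ)⁻¹ * ∑ i, f i (π i ℓ) (xbarStar f xstar (α t) π ℓ))
                - ((n : ℝ)⁻¹ * ∑ i, f i (π i ℓ) xstar)
                - (inner ℝ ((n : ℝ)⁻¹ • ∑ i, gradient (f i (π i ℓ)) xstar)
                    (xbarStar f xstar (α t) π ℓ - xstar) : ℝ))
            (Set.Finite.bddAbove (Set.finite_range _)) ℓ
        rw [h1]
        have h3 := mul_le_mul_of_nonneg_left h2
          (show (0:ℝ) ≤ 2 * α t by linarith [hαpos t])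
        linarith [h3]



end DRR
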